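/- Let A be an at most countable ω-categorical relational structure which is a model-complete core, and let B be the structure obtained from A by adding a singleton unary relation {s} for some element s of A. Then B is homomorphically equivalent to a pp-power of A. -/

import Mathlib

/-! ### Relational structures, pp-formulas, pp-powers -/

/-- A relational structure with signature `σ` (arities given by `ar`) on domain `D`. -/
structure RelStruct (σ : Type) (ar : σ → ℕ) (D : Type) where
  rel : ∀ s : σ, (Fin (ar s) → D) → Prop

section Rel

variable {σ : Type} {ar : σ → ℕ} {τ : Type} {br : τ → ℕ} {D E : Type}

/-- `h` is a homomorphism between two relational structures in the same signature. -/
def IsHomOf (SA : RelStruct σ ar D) (SB : RelStruct σ ar E) (h : D → E) : Prop :=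
  ∀ s t, SA.rel s t → SB.rel s (fun i => h (t i))

/-- Homomorphic equivalence of relational structures in the same signature. -/
def HomEquiv (SA : RelStruct σ ar D) (SB : RelStruct σ ar E) : Prop :=
  (∃ h, IsHomOf SA SB h) ∧ (∃ h, IsHomOf SB SA h)

/-- An automorphism of a relational structure. -/
def IsAutomorphism (S : RelStruct σ ar D) (g : D ≃ D) : Prop :=
  IsHomOf S S g ∧ IsHomOf S S g.symm

/-- ω-categoricity (for at most countable structures): for every `n` the componentwise
action of the automorphism group on `n`-tuples has finitely many orbits. -/
def OmegaCategorical (S : RelStruct σ ar D) : Prop :=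
  ∀ n : ℕ, Set.Finite { O : Set (Fin n → D) | ∃ t : Fin n → D,
    O = { u | ∃ g : D ≃ D, IsAutomorphism S g ∧ (fun i => g (t i)) = u } }

/-- A model-complete core: automorphisms are dense in endomorphisms. -/
def ModelCompleteCore (S : RelStruct σ ar D) : Prop :=
  ∀ e : D → D, IsHomOf S S e → ∀ F : Set D, F.Finite →
    ∃ g : D ≃ D, IsAutomorphism S g ∧ ∀ x ∈ F, g x = e x

/-- Primitive positive formulas over signature `(σ, ar)` with free variables of type `V`. -/
inductive PPFormula (σ : Type) (ar : σ → ℕ) : Type → Type 1 where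
  | rel {V : Type} (s : σ) (t : Fin (ar s) → V) : PPFormula σ ar V
  | eq {V : Type} (x y : V) : PPFormula σ ar V
  | and {V : Type} (φ ψ : PPFormula σ ar V) : PPFormula σ ar V
  | ex {V : Type} (φ : PPFormula σ ar (Option V)) : PPFormula σ ar V

/-- Satisfaction of a pp-formula under an assignment of the free variables. -/
def PPFormula.Sat (S : RelStruct σ ar D) : {V : Type} → PPFormula σ ar V → (V → D) → Prop
  | _, .rel s t, v => S.rel s (fun i => v (t i))
  | _, .eq x y, v => v x = v y
  | _, .and φ ψ, v => PPFormula.Sat S φ v ∧ PPFormula.Sat S ψ v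
  | _, .ex φ, v => ∃ d : D, PPFormula.Sat S φ (fun o => Option.elim o d v)

/-- A relation (with coordinates indexed by `V`) is pp-definable in `S`. -/
def PpDefinable (S : RelStruct σ ar D) {V : Type} (R : (V → D) → Prop) : Prop :=
  ∃ φ : PPFormula σ ar V, ∀ v, R v ↔ PPFormula.Sat S φ v

/-- `SB` is a pp-power of `SA`: `SB` is isomorphic to a structure with domain `D^n`
(`n ≥ 1`) whose relations, regarded as relations on `D` of `n`-fold arity,
are pp-definable in `SA`. -/
def IsPpPower (SA : RelStruct σ ar D) (SB : RelStruct τ br E) : Prop :=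
  ∃ n : ℕ, 0 < n ∧ ∃ e : E ≃ (Fin n → D),
    ∀ s : τ, PpDefinable SA (fun v : Fin (br s) × Fin n → D =>
      SB.rel s (fun j => e.symm (fun i => v (j, i))))

/-- `SB` is homomorphically equivalent to a pp-power of `SA`. -/
def HomEqPpPower (SA : RelStruct σ ar D) (SB : RelStruct τ br E) : Prop :=
  ∃ (C : Type) (SC : RelStruct τ br C), IsPpPower SA SC ∧ HomEquiv SB SC

end Rel

/-! ### Function clones (all operations have arity ≥ 1; arity index `n` means arity `n+1`) -/

/-- A set of finitary operations on `A`, where `C n` collects the `(n+1)`-ary members. -/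
def OpSet (A : Type) := ∀ n : ℕ, Set ((Fin (n+1) → A) → A)

section Clone

variable {A B : Type}

/-- A function clone: contains all projections and is closed under composition. -/
structure IsClone (C : OpSet A) : Prop where
  proj : ∀ (n : ℕ) (i : Fin (n+1)), (fun t => t i) ∈ C n
  comp : ∀ (n m : ℕ) (f : (Fin (n+1) → A) → A) (g : Fin (n+1) → ((Fin (m+1) → A) → A)),
    f ∈ C n → (∀ i, g i ∈ C m) → (fun t => f (fun i => g i t)) ∈ C m

/-- An arity-preserving assignment of operations on `B` to operations on `A`. -/
def CloneMap (A B : Type) := ∀ n : ℕ, ((Fin (n+1) → A) → A) → ((Fin (n+1) → B) → B)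

/-- `ξ` maps the members of `CA` to members of `CB`. -/
def MapsCloneInto (CA : OpSet A) (CB : OpSet B) (ξ : CloneMap A B) : Prop :=
  ∀ n f, f ∈ CA n → ξ n f ∈ CB n

/-- `ξ` preserves identities of height 1: it preserves taking minors (compositions
with projections). -/
def PreservesH1 (CA : OpSet A) (ξ : CloneMap A B) : Prop :=
  ∀ (n m : ℕ) (f : (Fin (n+1) → A) → A), f ∈ CA n → ∀ p : Fin (n+1) → Fin (m+1),
    ξ m (fun t => f (fun i => t (p i))) = fun t => ξ n f (fun i => t (p i))

/-- An h1 clone homomorphism from `CA` to `CB`. -/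
def IsH1Hom (CA : OpSet A) (CB : OpSet B) (ξ : CloneMap A B) : Prop :=
  MapsCloneInto CA CB ξ ∧ PreservesH1 CA ξ

/-- `ξ` sends every projection to the same projection. -/
def PreservesProj (ξ : CloneMap A B) : Prop :=
  ∀ (n : ℕ) (i : Fin (n+1)), ξ n (fun t => t i) = fun t => t i

/-- A strong h1 clone homomorphism: an h1 clone homomorphism preserving projections. -/
def IsStrongH1Hom (CA : OpSet A) (CB : OpSet B) (ξ : CloneMap A B) : Prop :=
  IsH1Hom CA CB ξ ∧ PreservesProj ξ

/-- A clone homomorphism: preserves projections and composition. -/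
def IsCloneHom (CA : OpSet A) (CB : OpSet B) (ξ : CloneMap A B) : Prop :=
  MapsCloneInto CA CB ξ ∧ PreservesProj ξ ∧
    ∀ (n m : ℕ) (f : (Fin (n+1) → A) → A) (g : Fin (n+1) → ((Fin (m+1) → A) → A)),
      f ∈ CA n → (∀ i, g i ∈ CA m) →
      ξ m (fun t => f (fun i => g i t)) = fun t => ξ n f (fun i => ξ m (g i) t)

/-- Uniform continuity of a map between function clones. -/
def UniformlyCont (CA : OpSet A) (ξ : CloneMap A B) : Prop :=
  ∀ Bf : Set B, Bf.Finite → ∃ Af : Set A, Af.Finite ∧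
    ∀ (n : ℕ) (f g : (Fin (n+1) → A) → A), f ∈ CA n → g ∈ CA n →
      (∀ t : Fin (n+1) → A, (∀ i, t i ∈ Af) → f t = g t) →
      ∀ u : Fin (n+1) → B, (∀ i, u i ∈ Bf) → ξ n f u = ξ n g u

/-- Continuity of a map between function clones (pointwise convergence topology). -/
def ContinuousCloneMap (CA : OpSet A) (ξ : CloneMap A B) : Prop :=
  ∀ (n : ℕ) (f : (Fin (n+1) → A) → A), f ∈ CA n → ∀ Bf : Set B, Bf.Finite →
    ∃ Af : Set A, Af.Finite ∧
      ∀ g, g ∈ CA n → (∀ t : Fin (n+1) → A, (∀ i, t i ∈ Af) → f t = g t) →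
        ∀ u : Fin (n+1) → B, (∀ i, u i ∈ Bf) → ξ n f u = ξ n g u

/-- `CB ∈ E Tra 𝒜`: some reflection of `CA` is contained in `CB`. -/
def InETra (CA : OpSet A) (CB : OpSet B) : Prop :=
  ∃ (h1 : B → A) (h2 : A → B), ∀ n f, f ∈ CA n →
    (fun t : Fin (n+1) → B => h2 (f (fun i => h1 (t i)))) ∈ CB n

/-- `CB ∈ E Tra Pfin 𝒜`: some reflection of a finite power of `CA` is contained in `CB`. -/
def InETraPfin (CA : OpSet A) (CB : OpSet B) : Prop :=
  ∃ (m : ℕ) (h1 : B → (Fin m → A)) (h2 : (Fin m → A) → B),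
    ∀ n f, f ∈ CA n →
      (fun u : Fin (n+1) → B => h2 (fun j => f (fun i => h1 (u i) j))) ∈ CB n

/-- `CB ∈ E Tra P 𝒜`: some reflection of a power of `CA` is contained in `CB`. -/
def InETraP (CA : OpSet A) (CB : OpSet B) : Prop :=
  ∃ (I : Type) (h1 : B → (I → A)) (h2 : (I → A) → B),
    ∀ n f, f ∈ CA n →
      (fun u : Fin (n+1) → B => h2 (fun j => f (fun i => h1 (u i) j))) ∈ CB n

/-- `CB ∈ E Ret Pfin 𝒜`. -/
def InERetPfin (CA : OpSet A) (CB : OpSet B) : Prop :=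
  ∃ (m : ℕ) (h1 : B → (Fin m → A)) (h2 : (Fin m → A) → B),
    (∀ b, h2 (h1 b) = b) ∧
    ∀ n f, f ∈ CA n →
      (fun u : Fin (n+1) → B => h2 (fun j => f (fun i => h1 (u i) j))) ∈ CB n

/-- `CB ∈ E Ret P 𝒜`. -/
def InERetP (CA : OpSet A) (CB : OpSet B) : Prop :=
  ∃ (I : Type) (h1 : B → (I → A)) (h2 : (I → A) → B),
    (∀ b, h2 (h1 b) = b) ∧
    ∀ n f, f ∈ CA n →
      (fun u : Fin (n+1) → B => h2 (fun j => f (fun i => h1 (u i) j))) ∈ CB n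

/-- `CB ∈ E H S Pfin 𝒜`: `CB` contains the clone obtained from some finite power of `CA`
by restricting to an invariant subset and taking the quotient action along a surjection. -/
def InEHSPfin (CA : OpSet A) (CB : OpSet B) : Prop :=
  ∃ (m : ℕ) (S : Set (Fin m → A)) (h : (Fin m → A) → B),
    (∀ (n : ℕ) (f : (Fin (n+1) → A) → A), f ∈ CA n →
      ∀ t : Fin (n+1) → (Fin m → A), (∀ i, t i ∈ S) → (fun j => f (fun i => t i j)) ∈ S) ∧
    (∀ b : B, ∃ x ∈ S, h x = b) ∧
    (∀ (n : ℕ) (f : (Fin (n+1) → A) → A), f ∈ CA n → ∃ f' ∈ CB n,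
      ∀ t : Fin (n+1) → (Fin m → A), (∀ i, t i ∈ S) →
        h (fun j => f (fun i => t i j)) = f' (fun i => h (t i)))

end Clone

section Pol

variable {σ : Type} {ar : σ → ℕ} {D : Type}

/-- The polymorphism clone of a relational structure. -/
def Pol (S : RelStruct σ ar D) : OpSet D :=
  fun n => { f | ∀ (s : σ) (ts : Fin (n+1) → (Fin (ar s) → D)),
    (∀ i, S.rel s (ts i)) → S.rel s (fun j => f (fun i => ts i j)) }

end Pol

/-- The expansion of a relational structure by singleton unary relations `{cs i}`
(the `i`-th added relation has arity 1 and contains exactly the tuple `(cs i)`). -/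
def addSingletons {σ : Type} {ar : σ → ℕ} {C : Type} (S : RelStruct σ ar C)
    {k : ℕ} (cs : Fin k → C) :
    RelStruct (σ ⊕ Fin k) (Sum.elim ar (fun _ => 1)) C where
  rel := fun s => match s with
    | .inl s => fun t => S.rel s t
    | .inr i => fun t => ∀ j, t j = cs i

section Stmt7Aux

open Classical

variable {σ : Type} {ar : σ → ℕ} {D : Type}

namespace PPFormula

/-- Relabeling of the free variables of a pp-formula. -/
def map : {V W : Type} → (V → W) → PPFormula σ ar V → PPFormula σ ar W
  | _, _, f, .rel s t => .rel s (fun i => f (t i))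
  | _, _, f, .eq x y => .eq (f x) (f y)
  | _, _, f, .and φ ψ => .and (map f φ) (map f ψ)
  | _, _, f, .ex φ => .ex (map (Option.map f) φ)

theorem sat_map (S : RelStruct σ ar D) :
    ∀ {V W : Type} (f : V → W) (φ : PPFormula σ ar V) (v : W → D),
      PPFormula.Sat S (map f φ) v ↔ PPFormula.Sat S φ (fun x => v (f x))
  | _, _, _, .rel _ _, _ => Iff.rfl
  | _, _, _, .eq _ _, _ => Iff.rfl
  | _, _, f, .and φ ψ, v => by
      simp only [map, Sat, sat_map S f φ v, sat_map S f ψ v]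
  | _, _, f, .ex φ, v => by
      simp only [map, Sat]
      refine exists_congr fun d => ?_
      rw [sat_map S (Option.map f) φ]
      exact iff_of_eq (congrArg (PPFormula.Sat S φ)
        (funext fun o => by cases o <;> rfl))

/-- pp-formulas are preserved by endomorphisms. -/
theorem sat_hom {S : RelStruct σ ar D} {h : D → D} (hh : IsHomOf S S h) :
    ∀ {V : Type} (φ : PPFormula σ ar V) (v : V → D),
      PPFormula.Sat S φ v → PPFormula.Sat S φ (fun x => h (v x))
  | _, .rel s t, v, hs => hh s (fun i => v (t i)) hs
  | _, .eq _ _, _, he => congrArg h he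
  | _, .and φ ψ, v, hs => ⟨sat_hom hh φ v hs.1, sat_hom hh ψ v hs.2⟩
  | _, .ex φ, v, hs => by
      obtain ⟨d, hd⟩ := hs
      refine ⟨h d, ?_⟩
      have hthis := sat_hom hh φ (fun o => Option.elim o d v) hd
      have heq : (fun x => h ((fun o => Option.elim o d v) x))
          = (fun o => Option.elim o (h d) (fun x => h (v x))) :=
        funext fun o => by cases o <;> rfl
      exact heq ▸ hthis

/-- pp-formulas are invariant under automorphisms. -/
theorem sat_aut {S : RelStruct σ ar D} {g : D ≃ D} (hg : IsAutomorphism S g)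
    {V : Type} (φ : PPFormula σ ar V) (v : V → D) :
    PPFormula.Sat S φ v ↔ PPFormula.Sat S φ (fun x => g (v x)) := by
  constructor
  · exact sat_hom hg.1 φ v
  · intro hs
    have := sat_hom hg.2 φ (fun x => g (v x)) hs
    simpa using this

end PPFormula

/-- pp-definability of a set of `k`-tuples. -/
def PD (S : RelStruct σ ar D) (k : ℕ) (R : Set (Fin k → D)) : Prop :=
  ∃ φ : PPFormula σ ar (Fin k), ∀ v, v ∈ R ↔ PPFormula.Sat S φ v

lemma id_aut (S : RelStruct σ ar D) : IsAutomorphism S (Equiv.refl D) :=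
  ⟨fun s t h => by simpa using h, fun s t h => by simpa using h⟩

lemma pd_invariant {S : RelStruct σ ar D} {k : ℕ} {R : Set (Fin k → D)}
    (hR : PD S k R) {g : D ≃ D} (hg : IsAutomorphism S g) {v : Fin k → D}
    (hv : v ∈ R) : (fun i => g (v i)) ∈ R := by
  obtain ⟨φ, hφ⟩ := hR
  exact (hφ _).2 ((PPFormula.sat_aut hg φ v).1 ((hφ v).1 hv))

/-- There are only finitely many pp-definable `k`-ary relations. -/
lemma pd_finite (S : RelStruct σ ar D) (hcat : OmegaCategorical S) (k : ℕ) :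
    {R : Set (Fin k → D) | PD S k R}.Finite := by
  have hfin := hcat k
  have hsub : ∀ R ∈ {R : Set (Fin k → D) | PD S k R},
      R = ⋃₀ {O ∈ { O : Set (Fin k → D) | ∃ t : Fin k → D,
        O = { u | ∃ g : D ≃ D, IsAutomorphism S g ∧ (fun i => g (t i)) = u } } | O ⊆ R} := by
    intro R hR
    apply Set.Subset.antisymm
    · intro v hv
      refine Set.mem_sUnion.2
        ⟨{u | ∃ g : D ≃ D, IsAutomorphism S g ∧ (fun i => g (v i)) = u}, ⟨⟨v, rfl⟩, ?_⟩, ?_⟩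
      · rintro u ⟨g, hg, rfl⟩; exact pd_invariant hR hg hv
      · exact ⟨Equiv.refl D, id_aut S, funext fun i => by simp⟩
    · rintro v ⟨O, ⟨_, hOR⟩, hvO⟩; exact hOR hvO
  apply Set.Finite.of_finite_image
    (f := fun R => {O ∈ { O : Set (Fin k → D) | ∃ t : Fin k → D,
        O = { u | ∃ g : D ≃ D, IsAutomorphism S g ∧ (fun i => g (t i)) = u } } | O ⊆ R})
  · exact hfin.finite_subsets.subset (by rintro _ ⟨R, _, rfl⟩; exact fun O hO => hO.1)
  · intro R1 h1 R2 h2 he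
    rw [hsub R1 h1, hsub R2 h2]
    exact congrArg Set.sUnion he

/-- The smallest pp-definable set containing a given tuple. -/
def typeMin (S : RelStruct σ ar D) {k : ℕ} (t : Fin k → D) : Set (Fin k → D) :=
  ⋂₀ {R | PD S k R ∧ t ∈ R}

lemma self_mem_typeMin (S : RelStruct σ ar D) {k : ℕ} (t : Fin k → D) :
    t ∈ typeMin S t :=
  Set.mem_sInter.2 fun _ hR => hR.2

lemma typeMin_spec {S : RelStruct σ ar D} {k : ℕ} {u t : Fin k → D}
    (hu : u ∈ typeMin S t) (φ : PPFormula σ ar (Fin k))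
    (hφ : PPFormula.Sat S φ t) : PPFormula.Sat S φ u :=
  (Set.mem_sInter.1 hu) {v | PPFormula.Sat S φ v} ⟨⟨φ, fun _ => Iff.rfl⟩, hφ⟩

lemma pd_sInter (S : RelStruct σ ar D) (d₀ : D) {k : ℕ}
    {F : Set (Set (Fin k → D))} (hF : F.Finite)
    (h : ∀ R ∈ F, PD S k R) : PD S k (⋂₀ F) := by
  classical
  revert h
  refine Set.Finite.induction_on (motive := fun F _ => (∀ R ∈ F, PD S k R) → PD S k (⋂₀ F)) F hF ?_ ?_
  · intro _
    refine ⟨.ex (.eq none none), fun v => ?_⟩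
    constructor
    · intro _; exact ⟨d₀, rfl⟩
    · intro _; exact Set.mem_sInter.2 fun R hR => absurd hR (Set.notMem_empty R)
  · rintro a s _ _ ih h
    obtain ⟨φa, hφa⟩ := h a (Set.mem_insert _ _)
    obtain ⟨φs, hφs⟩ := ih (fun R hR => h R (Set.mem_insert_of_mem _ hR))
    refine ⟨.and φa φs, fun v => ?_⟩
    rw [Set.sInter_insert]
    exact and_congr (hφa v) (hφs v)

lemma pd_typeMin (S : RelStruct σ ar D) (hcat : OmegaCategorical S) (d₀ : D)
    {k : ℕ} (t : Fin k → D) : PD S k (typeMin S t) := by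
  apply pd_sInter S d₀
  · exact (pd_finite S hcat k).subset (fun R hR => hR.1)
  · exact fun R hR => hR.1

/-- Embedding used to existentially quantify away the last coordinate. -/
def embO (m : ℕ) : Fin (m+1) → Option (Fin m) := fun i =>
  if h : (i : ℕ) < m then some ⟨i, h⟩ else none

lemma elim_embO {m : ℕ} (v : Fin m → D) (e : D) :
    (fun i : Fin (m+1) => Option.elim (embO m i) e v) = Fin.snoc v e := by
  funext i
  by_cases h : (i : ℕ) < m
  · rw [← Fin.castSucc_castLT i h, Fin.snoc_castSucc]
    show Option.elim (embO m _) e v = _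
    unfold embO
    rw [dif_pos (show ((Fin.castSucc (Fin.castLT i h) : Fin (m+1)) : ℕ) < m from
      (Fin.castLT i h).isLt)]
    exact congrArg v (Fin.ext rfl)
  · have hi : i = Fin.last m := Fin.ext (by have := i.isLt; simp; omega)
    subst hi
    rw [Fin.snoc_last]
    unfold embO
    rw [dif_neg h]
    rfl

lemma typeMin_ext (S : RelStruct σ ar D) (hcat : OmegaCategorical S) (d₀ : D)
    {m : ℕ} {t u : Fin m → D} (hu : u ∈ typeMin S t) (x : D) :
    ∃ e, Fin.snoc u e ∈ typeMin S (Fin.snoc t x) := by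
  obtain ⟨ψ, hψ⟩ := pd_typeMin S hcat d₀ (Fin.snoc t x)
  have key : ∀ w : Fin m → D,
      PPFormula.Sat S (.ex (PPFormula.map (embO m) ψ)) w ↔
        ∃ e, Fin.snoc w e ∈ typeMin S (Fin.snoc t x) := by
    intro w
    show (∃ e, PPFormula.Sat S (PPFormula.map (embO m) ψ)
        (fun o => Option.elim o e w)) ↔ _
    refine exists_congr fun e => ?_
    rw [PPFormula.sat_map]
    rw [show (fun i => Option.elim (embO m i) e w) = Fin.snoc w e from elim_embO w e]
    exact (hψ _).symm
  have h1 : PPFormula.Sat S (.ex (PPFormula.map (embO m) ψ)) t :=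
    (key t).2 ⟨x, self_mem_typeMin S _⟩
  exact (key u).1 (typeMin_spec hu _ h1)

/-- The chain of longer and longer tuples witnessing the pp-type of `d`. -/
noncomputable def chainSeq (S : RelStruct σ ar D) (hcat : OmegaCategorical S)
    (d₀ : D) (d : ℕ → D) (a : D)
    (ha : (fun _ : Fin 1 => a) ∈ typeMin S (fun i : Fin 1 => d i)) :
    (n : ℕ) → {u : Fin (n+1) → D // u ∈ typeMin S (fun i : Fin (n+1) => d i)}
  | 0 => ⟨fun _ => a, ha⟩
  | n+1 =>
      let p := chainSeq S hcat d₀ d a ha n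
      let h := typeMin_ext S hcat d₀ p.2 (d (n+1))
      ⟨Fin.snoc p.1 (Classical.choose h), by
        have hs := Classical.choose_spec h
        have heq : Fin.snoc (fun i : Fin (n+1) => d i) (d (n+1))
            = (fun i : Fin (n+2) => d i) := by
          funext i
          induction i using Fin.lastCases with
          | last => simp
          | cast j => simp
        rw [← heq]
        exact hs⟩

lemma chainSeq_castSucc (S : RelStruct σ ar D) (hcat : OmegaCategorical S)
    (d₀ : D) (d : ℕ → D) (a : D)
    (ha : (fun _ : Fin 1 => a) ∈ typeMin S (fun i : Fin 1 => d i))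
    (n : ℕ) (j : Fin (n+1)) :
    (chainSeq S hcat d₀ d a ha (n+1)).1 (Fin.castSucc j)
      = (chainSeq S hcat d₀ d a ha n).1 j := by
  show (Fin.snoc (chainSeq S hcat d₀ d a ha n).1 _ : Fin (n+2) → D) (Fin.castSucc j) = _
  rw [Fin.snoc_castSucc]

lemma chainSeq_eval (S : RelStruct σ ar D) (hcat : OmegaCategorical S)
    (d₀ : D) (d : ℕ → D) (a : D)
    (ha : (fun _ : Fin 1 => a) ∈ typeMin S (fun i : Fin 1 => d i)) :
    ∀ (n : ℕ) (j : Fin (n+1)), (chainSeq S hcat d₀ d a ha n).1 j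
      = (chainSeq S hcat d₀ d a ha j.val).1 (Fin.last j.val) := by
  intro n
  induction n with
  | zero =>
    intro j
    have hj : j = Fin.last 0 := Fin.ext (by omega)
    rw [hj]
    rfl
  | succ n ih =>
    intro j
    induction j using Fin.lastCases with
    | last => rfl
    | cast j' =>
      rw [chainSeq_castSucc, ih j']
      rfl

/-- Main compactness argument: if `a` satisfies every pp-formula satisfied by `s₀`,
then there is an endomorphism sending `s₀` to `a`. -/
lemma exists_endo (S : RelStruct σ ar D) [Countable D]
    (hcat : OmegaCategorical S) (s₀ a : D)
    (ha : (fun _ : Fin 1 => a) ∈ typeMin S (fun _ : Fin 1 => s₀)) :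
    ∃ e : D → D, IsHomOf S S e ∧ e s₀ = a := by
  classical
  have : Nonempty D := ⟨s₀⟩
  obtain ⟨f, hf⟩ := exists_surjective_nat D
  set d : ℕ → D := fun n => Nat.rec s₀ (fun k _ => f k) n with hd
  have hd0 : d 0 = s₀ := rfl
  have hdsurj : Function.Surjective d := by
    intro x; obtain ⟨k, hk⟩ := hf x; exact ⟨k+1, hk⟩
  have ha' : (fun _ : Fin 1 => a) ∈ typeMin S (fun i : Fin 1 => d i) := by
    have heq : (fun i : Fin 1 => d i) = (fun _ : Fin 1 => s₀) := by
      funext i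
      have h0 : (i : ℕ) = 0 := by omega
      rw [h0]
      exact hd0
    rw [heq]; exact ha
  set cs := chainSeq S hcat s₀ d a ha' with hcs
  set c : ℕ → D := fun n => (cs n).1 (Fin.last n) with hc
  have hc0 : c 0 = a := rfl
  have hmem : ∀ n, (fun j : Fin (n+1) => c j) ∈ typeMin S (fun j : Fin (n+1) => d j) := by
    intro n
    have heq : (fun j : Fin (n+1) => c (j : ℕ)) = (cs n).1 :=
      funext fun j => (chainSeq_eval S hcat s₀ d a ha' n j).symm
    rw [heq]; exact (cs n).2
  have key : ∀ (n : ℕ) (φ : PPFormula σ ar (Fin (n+1))),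
      PPFormula.Sat S φ (fun j => d j) → PPFormula.Sat S φ (fun j => c j) :=
    fun n φ h => typeMin_spec (hmem n) φ h
  have hwell : ∀ i j : ℕ, d i = d j → c i = c j := by
    intro i j hij
    have hi : i < max i j + 1 := by omega
    have hj : j < max i j + 1 := by omega
    exact key (max i j) (.eq ⟨i, hi⟩ ⟨j, hj⟩) hij
  choose ix hix using hdsurj
  refine ⟨fun x => c (ix x), ?_, ?_⟩
  · intro s t ht
    set m : Fin (ar s) → ℕ := fun i => ix (t i) with hm
    set N := Finset.univ.sup m with hN
    have hmN : ∀ i, m i < N + 1 :=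
      fun i => Nat.lt_succ_of_le (Finset.le_sup (Finset.mem_univ i))
    have hsat : PPFormula.Sat S
        (.rel s (fun i => (⟨m i, hmN i⟩ : Fin (N+1)))) (fun j : Fin (N+1) => d j) := by
      show S.rel s (fun i => d (m i))
      have heq : (fun i => d (m i)) = t := funext fun i => hix (t i)
      rw [heq]; exact ht
    exact key N _ hsat
  · show c (ix s₀) = a
    rw [← hc0]
    exact hwell _ _ (by rw [hix s₀, hd0])

/-- In an ω-categorical model-complete core, the orbit of `s₀` is pp-definable. -/
lemma orbit_pd (S : RelStruct σ ar D) [Countable D] (hcat : OmegaCategorical S)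
    (hmc : ModelCompleteCore S) (s₀ : D) :
    ∃ φ : PPFormula σ ar (Fin 1), ∀ v : Fin 1 → D,
      (∃ g : D ≃ D, IsAutomorphism S g ∧ g s₀ = v 0) ↔ PPFormula.Sat S φ v := by
  obtain ⟨φ, hφ⟩ := pd_typeMin S hcat s₀ (fun _ : Fin 1 => s₀)
  refine ⟨φ, fun v => ?_⟩
  rw [← hφ v]
  constructor
  · rintro ⟨g, hg, hgs⟩
    refine Set.mem_sInter.2 fun R hR => ?_
    have hmem := pd_invariant hR.1 hg hR.2
    have hv : (fun i : Fin 1 => g ((fun _ : Fin 1 => s₀) i)) = v := by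
      funext i
      have h0 : i = 0 := Subsingleton.elim i 0
      rw [h0]; exact hgs
    rw [← hv]; exact hmem
  · intro hv
    have ha : (fun _ : Fin 1 => v 0) ∈ typeMin S (fun _ : Fin 1 => s₀) := by
      have heq : (fun _ : Fin 1 => v 0) = v := by
        funext i
        exact congrArg v (Subsingleton.elim 0 i)
      rw [heq]; exact hv
    obtain ⟨e, he, hes⟩ := exists_endo S hcat s₀ (v 0) ha
    obtain ⟨g, hg, hgs⟩ := hmc e he {s₀} (Set.finite_singleton s₀)
    exact ⟨g, hg, by rw [hgs s₀ (Set.mem_singleton s₀), hes]⟩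

lemma sat_foldr_eqs (S : RelStruct σ ar D) {k : ℕ} (l : List (Fin k))
    (base : PPFormula σ ar (Option (Fin k × Fin 2))) (w : Option (Fin k × Fin 2) → D) :
    PPFormula.Sat S
      (l.foldr (fun j acc => .and (.eq (some (j, (1 : Fin 2))) none) acc) base) w
      ↔ (∀ j ∈ l, w (some (j, 1)) = w none) ∧ PPFormula.Sat S base w := by
  induction l with
  | nil => simp
  | cons x xs ih =>
    show (w (some (x, 1)) = w none ∧ _) ↔ _
    rw [ih, List.forall_mem_cons, and_assoc]

end Stmt7Aux

/-- Lemma 3.6 of the paper. Let `SA` be an at most countable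
ω-categorical structure which is a model-complete core, and let `SB` be obtained from
`SA` by adding a singleton unary relation `{s₀}`. Then `SB` is homomorphically
equivalent to a pp-power of `SA`. -/
theorem stmt7 {σ : Type} {ar : σ → ℕ} {D : Type} [Countable D]
    (SA : RelStruct σ ar D) (hcat : OmegaCategorical SA) (hmc : ModelCompleteCore SA)
    (s₀ : D) :
    HomEqPpPower SA (addSingletons SA (fun _ : Fin 1 => s₀)) := by
  classical
  obtain ⟨φO, hφO⟩ := orbit_pd SA hcat hmc s₀
  refine ⟨Fin 2 → D,
    ⟨fun s => match s with
      | .inl s => fun t => SA.rel s (fun j => t j 0) ∧ ∃ y, ∀ j, t j 1 = y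
      | .inr _ => fun t => t ⟨0, Nat.one_pos⟩ 0 = t ⟨0, Nat.one_pos⟩ 1 ∧
          ∃ g : D ≃ D, IsAutomorphism SA g ∧ g s₀ = t ⟨0, Nat.one_pos⟩ 0⟩, ?_, ?_, ?_⟩
  · -- pp-power
    refine ⟨2, by norm_num, Equiv.refl _, ?_⟩
    rintro (s | i)
    · -- relation coming from `SA`
      refine ⟨.ex ((List.finRange (ar s)).foldr
          (fun j acc => .and (.eq (some (j, (1 : Fin 2))) none) acc)
          (.rel s (fun j => some (j, (0 : Fin 2))))), fun v => ?_⟩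
      show (SA.rel s (fun j => v (j, 0)) ∧ ∃ y, ∀ j, v (j, 1) = y) ↔
        ∃ y : D, PPFormula.Sat SA _ (fun o => Option.elim o y v)
      constructor
      · rintro ⟨hr, y, hy⟩
        refine ⟨y, ?_⟩
        exact (sat_foldr_eqs SA (List.finRange (ar s)) _ _).2 ⟨fun j _ => hy j, hr⟩
      · rintro ⟨y, hy⟩
        replace hy := (sat_foldr_eqs SA (List.finRange (ar s)) _ _).1 hy
        exact ⟨hy.2, y, fun j => hy.1 j (List.mem_finRange j)⟩
    · -- the added singleton relation
      refine ⟨.and (.eq (⟨⟨0, Nat.one_pos⟩, 0⟩) (⟨⟨0, Nat.one_pos⟩, 1⟩))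
          (PPFormula.map (fun _ : Fin 1 => (⟨⟨0, Nat.one_pos⟩, 0⟩)) φO), fun v => ?_⟩
      show (v ⟨⟨0, Nat.one_pos⟩, 0⟩ = v ⟨⟨0, Nat.one_pos⟩, 1⟩ ∧
          ∃ g : D ≃ D, IsAutomorphism SA g ∧ g s₀ = v ⟨⟨0, Nat.one_pos⟩, 0⟩) ↔ _ ∧ _
      exact and_congr Iff.rfl
        ((hφO (fun _ : Fin 1 => v ⟨⟨0, Nat.one_pos⟩, 0⟩)).trans
          (PPFormula.sat_map SA _ φO v).symm)
  · -- homomorphism B → C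
    refine ⟨fun x (i : Fin 2) => if i = 0 then x else s₀, ?_⟩
    rintro (s | i) t ht
    · constructor
      · show SA.rel s (fun j => if (0 : Fin 2) = 0 then t j else s₀)
        simpa using (show SA.rel s t from ht)
      · exact ⟨s₀, fun j => if_neg (by decide)⟩
    · have h0 : t ⟨0, Nat.one_pos⟩ = s₀ := ht ⟨0, Nat.one_pos⟩
      constructor
      · show (if (0 : Fin 2) = 0 then t ⟨0, Nat.one_pos⟩ else s₀)
            = (if (1 : Fin 2) = 0 then t ⟨0, Nat.one_pos⟩ else s₀)
        rw [if_pos rfl, if_neg (by decide), h0]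
      · refine ⟨Equiv.refl D, id_aut SA, ?_⟩
        show Equiv.refl D s₀ = (if (0 : Fin 2) = 0 then t ⟨0, Nat.one_pos⟩ else s₀)
        rw [if_pos rfl, h0]; rfl
  · -- homomorphism C → B
    refine ⟨fun u => if h : ∃ g : D ≃ D, IsAutomorphism SA g ∧ g s₀ = u 1
        then (Classical.choose h).symm (u 0) else u 0, ?_⟩
    rintro (s | i) t ht
    · obtain ⟨hr, y, hy⟩ := ht
      show SA.rel s _
      have hgt : ∀ j : Fin (ar s),
          (if h : ∃ g : D ≃ D, IsAutomorphism SA g ∧ g s₀ = t j 1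
            then (Classical.choose h).symm (t j 0) else t j 0)
          = (if h : ∃ g : D ≃ D, IsAutomorphism SA g ∧ g s₀ = y
            then (Classical.choose h).symm (t j 0) else t j 0) := by
        intro j; rw [hy j]
      by_cases hO : ∃ g : D ≃ D, IsAutomorphism SA g ∧ g s₀ = y
      · have hrel := (Classical.choose_spec hO).1.2 s (fun j => t j 0) hr
        have heq : (fun j : Fin (ar s) =>
            (if h : ∃ g : D ≃ D, IsAutomorphism SA g ∧ g s₀ = t j 1
              then (Classical.choose h).symm (t j 0) else t j 0))
            = fun j => (Classical.choose hO).symm (t j 0) := by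
          funext j; rw [hgt j, dif_pos hO]
        exact heq ▸ hrel
      · have heq : (fun j : Fin (ar s) =>
            (if h : ∃ g : D ≃ D, IsAutomorphism SA g ∧ g s₀ = t j 1
              then (Classical.choose h).symm (t j 0) else t j 0))
            = fun j => t j 0 := by
          funext j; rw [hgt j, dif_neg hO]
        exact heq ▸ hr
    · obtain ⟨heq01, hO⟩ := ht
      intro j
      have hj : j = ⟨0, Nat.one_pos⟩ := Fin.ext (Nat.lt_one_iff.mp j.isLt)
      subst hj
      show (if h : ∃ g : D ≃ D, IsAutomorphism SA g ∧ g s₀ = t ⟨0, Nat.one_pos⟩ 1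
          then (Classical.choose h).symm (t ⟨0, Nat.one_pos⟩ 0)
          else t ⟨0, Nat.one_pos⟩ 0) = s₀
      have hO' : ∃ g : D ≃ D, IsAutomorphism SA g ∧ g s₀ = t ⟨0, Nat.one_pos⟩ 1 :=
        heq01 ▸ hO
      rw [dif_pos hO']
      have hspec := (Classical.choose_spec hO').2
      rw [heq01]
      exact (Equiv.symm_apply_eq _).2 hspec.symm
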